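/- For s ∈ ℚ(√2) ∩ [0, √2] let d*(s) denote the least positive integer d such that d·s ∈ ℤ[√2]. Then for every s ∈ ℚ(√2) ∩ [0, √2], f(s) ∈ ℚ(√2) and d*(f(s)) = d*(s); that is, the minimal denominator d* is a constant of the motion for f. -/
import Mathlib


noncomputable section

/-- `β = √2 - 1`. -/
def β : ℝ := Real.sqrt 2 - 1

/-- `ω = √2 + 1`. -/
def ω : ℝ := Real.sqrt 2 + 1

/-- The break points `Δ_i`. -/
def Δ (i : ℤ) : ℝ :=
  if i < 0 then β ^ i.natAbs
  else if i = 0 then β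
  else Real.sqrt 2 - β ^ i.natAbs

/-- The intervals `I_i`. -/
def Iint (i : ℤ) : Set ℝ :=
  if i < 0 then Set.Ioc (Δ (i - 1)) (Δ i)
  else if i = 0 then Set.Ioo β 1
  else Set.Ico (Δ i) (Δ (i + 1))

/-- The defining formula of `f` on the interval `I_i`. -/
def fval (i : ℤ) (s : ℝ) : ℝ :=
  if i < 0 then ω ^ (i.natAbs + 1) * (Δ i - s)
  else if i = 0 then ω * (s - β)
  else ω ^ (i.natAbs + 1) * (s - Δ i)

/-- `f` is the renormalization map: `f 0 = f √2 = 0` and on each interval `I_i`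
    it is given by the corresponding affine formula. These conditions determine
    `f` uniquely on `[0, √2]`. -/
def IsLuroth (f : ℝ → ℝ) : Prop :=
  f 0 = 0 ∧ f (Real.sqrt 2) = 0 ∧ ∀ i : ℤ, ∀ s ∈ Iint i, f s = fval i s

/-- `ℚ(√2)` as a subset of `ℝ`. -/
def QSqrt2 : Set ℝ := {x | ∃ a b : ℚ, x = (a : ℝ) + (b : ℝ) * Real.sqrt 2}

/-- `ℤ[√2]` as a subset of `ℝ`. -/
def ZSqrt2 : Set ℝ := {x | ∃ m n : ℤ, x = (m : ℝ) + (n : ℝ) * Real.sqrt 2}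

/-- `M_d = {s ∈ [0,√2] : d·s ∈ ℤ[√2]}`. -/
def Mset (d : ℤ) : Set ℝ :=
  {s | s ∈ Set.Icc 0 (Real.sqrt 2) ∧ (d : ℝ) * s ∈ ZSqrt2}

-- basics
lemma sqrt2_sq : Real.sqrt 2 * Real.sqrt 2 = 2 := Real.mul_self_sqrt (by norm_num)
lemma one_lt_sqrt2 : 1 < Real.sqrt 2 := by nlinarith [sqrt2_sq, Real.sqrt_nonneg 2]
lemma sqrt2_lt_two : Real.sqrt 2 < 2 := by nlinarith [sqrt2_sq, Real.sqrt_nonneg 2]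
lemma beta_pos : 0 < β := by unfold β; linarith [one_lt_sqrt2]
lemma beta_lt_one : β < 1 := by unfold β; linarith [sqrt2_lt_two]
lemma omega_mul_beta : ω * β = 1 := by unfold ω β; nlinarith [sqrt2_sq]

-- ZSqrt2 closure
lemma Z_mem (m n : ℤ) : (m : ℝ) + (n : ℝ) * Real.sqrt 2 ∈ ZSqrt2 := ⟨m, n, rfl⟩
lemma Z_zero : (0 : ℝ) ∈ ZSqrt2 := ⟨0, 0, by norm_num⟩
lemma Z_add {x y : ℝ} (hx : x ∈ ZSqrt2) (hy : y ∈ ZSqrt2) : x + y ∈ ZSqrt2 := by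
  obtain ⟨m, n, rfl⟩ := hx; obtain ⟨m', n', rfl⟩ := hy
  exact ⟨m + m', n + n', by push_cast; ring⟩
lemma Z_neg {x : ℝ} (hx : x ∈ ZSqrt2) : -x ∈ ZSqrt2 := by
  obtain ⟨m, n, rfl⟩ := hx; exact ⟨-m, -n, by push_cast; ring⟩
lemma Z_sub {x y : ℝ} (hx : x ∈ ZSqrt2) (hy : y ∈ ZSqrt2) : x - y ∈ ZSqrt2 := by
  simpa [sub_eq_add_neg] using Z_add hx (Z_neg hy)
lemma Z_mul {x y : ℝ} (hx : x ∈ ZSqrt2) (hy : y ∈ ZSqrt2) : x * y ∈ ZSqrt2 := by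
  obtain ⟨m, n, rfl⟩ := hx; obtain ⟨m', n', rfl⟩ := hy
  refine ⟨m * m' + 2 * n * n', m * n' + n * m', ?_⟩
  push_cast; linear_combination ((n : ℝ) * (n' : ℝ)) * sqrt2_sq
lemma Z_beta : β ∈ ZSqrt2 := ⟨-1, 1, by unfold β; push_cast; ring⟩
lemma Z_omega : ω ∈ ZSqrt2 := ⟨1, 1, by unfold ω; push_cast; ring⟩
lemma Z_pow {x : ℝ} (hx : x ∈ ZSqrt2) (k : ℕ) : x ^ k ∈ ZSqrt2 := by
  induction k with
  | zero => exact ⟨1, 0, by norm_num⟩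
  | succ k ih => rw [pow_succ]; exact Z_mul ih hx
lemma Z_Delta (i : ℤ) : Δ i ∈ ZSqrt2 := by
  unfold Δ
  split
  · exact Z_pow Z_beta _
  · split
    · exact Z_beta
    · exact Z_sub ⟨0, 1, by push_cast; ring⟩ (Z_pow Z_beta _)
lemma Z_unit_iff (m : ℕ) (x : ℝ) : ω ^ m * x ∈ ZSqrt2 ↔ x ∈ ZSqrt2 := by
  constructor
  · intro h
    have : x = β ^ m * (ω ^ m * x) := by
      have : (β * ω) ^ m = 1 := by rw [mul_comm, omega_mul_beta, one_pow]
      rw [← mul_assoc, ← mul_pow, this, one_mul]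
    rw [this]; exact Z_mul (Z_pow Z_beta m) h
  · intro h; exact Z_mul (Z_pow Z_omega m) h
lemma Z_neg_iff (x : ℝ) : -x ∈ ZSqrt2 ↔ x ∈ ZSqrt2 :=
  ⟨fun h => by simpa using Z_neg h, Z_neg⟩

-- QSqrt2 closure
lemma Q_sub {x y : ℝ} (hx : x ∈ QSqrt2) (hy : y ∈ QSqrt2) : x - y ∈ QSqrt2 := by
  obtain ⟨a, b, rfl⟩ := hx; obtain ⟨a', b', rfl⟩ := hy
  exact ⟨a - a', b - b', by push_cast; ring⟩
lemma Q_mul {x y : ℝ} (hx : x ∈ QSqrt2) (hy : y ∈ QSqrt2) : x * y ∈ QSqrt2 := by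
  obtain ⟨a, b, rfl⟩ := hx; obtain ⟨a', b', rfl⟩ := hy
  refine ⟨a * a' + 2 * b * b', a * b' + b * a', ?_⟩
  push_cast; linear_combination ((b : ℝ) * (b' : ℝ)) * sqrt2_sq
lemma Z_subset_Q {x : ℝ} (hx : x ∈ ZSqrt2) : x ∈ QSqrt2 := by
  obtain ⟨m, n, rfl⟩ := hx; exact ⟨m, n, by push_cast; ring⟩

-- uniform description of fval
lemma fval_eq (i : ℤ) (s : ℝ) :
    fval i s = ω ^ (i.natAbs + 1) * (s - Δ i) ∨
    fval i s = ω ^ (i.natAbs + 1) * (Δ i - s) := by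
  unfold fval
  split
  · right; rfl
  · split
    · left
      rename_i h1 h2
      subst h2
      simp [Δ]
    · left; rfl

-- key denominator lemma
lemma key (i : ℤ) (s d : ℝ) (hd : d ∈ ZSqrt2) :
    d * s ∈ ZSqrt2 ↔ d * fval i s ∈ ZSqrt2 := by
  have hdc : d * Δ i ∈ ZSqrt2 := Z_mul hd (Z_Delta i)
  have h1 : d * s ∈ ZSqrt2 ↔ d * s - d * Δ i ∈ ZSqrt2 := by
    constructor
    · intro h; exact Z_sub h hdc
    · intro h; have := Z_add h hdc; simpa using this
  rcases fval_eq i s with h | h <;> rw [h]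
  · rw [show d * (ω ^ (i.natAbs + 1) * (s - Δ i)) = ω ^ (i.natAbs + 1) * (d * s - d * Δ i) by ring,
      Z_unit_iff]
    exact h1
  · rw [show d * (ω ^ (i.natAbs + 1) * (Δ i - s)) = ω ^ (i.natAbs + 1) * (-(d * s - d * Δ i)) by ring,
      Z_unit_iff, Z_neg_iff]
    exact h1

-- covering helper
lemma exists_k {t : ℝ} (h0 : 0 < t) (h1 : t ≤ β) :
    ∃ k : ℕ, 1 ≤ k ∧ β ^ (k + 1) < t ∧ t ≤ β ^ k := by
  have hex : ∃ j : ℕ, β ^ j < t := exists_pow_lt_of_lt_one h0 beta_lt_one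
  classical
  let N := Nat.find hex
  have hN : β ^ N < t := Nat.find_spec hex
  have h2 : 2 ≤ N := by
    rcases Nat.lt_or_ge N 2 with h | h
    · interval_cases N
      · simp only [pow_zero] at hN; linarith [beta_lt_one]
      · simp only [pow_one] at hN; linarith
    · exact h
  refine ⟨N - 1, by omega, ?_, ?_⟩
  · have : N - 1 + 1 = N := by omega
    rw [this]; exact hN
  · have := Nat.find_min hex (show N - 1 < N by omega)
    linarith


lemma exists_interval {s : ℝ} (h0 : 0 < s) (h2 : s < Real.sqrt 2) : ∃ i, s ∈ Iint i := by
  rcases le_or_gt s β with hb | hb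
  · obtain ⟨k, hk1, hka, hkb⟩ := exists_k h0 hb
    refine ⟨-(k : ℤ), ?_⟩
    have hneg : (-(k : ℤ)) < 0 := by omega
    simp only [Iint, if_pos hneg]
    constructor
    · have hneg' : (-(k : ℤ) - 1) < 0 := by omega
      simp only [Δ, if_pos hneg']
      have hn : (-(k : ℤ) - 1).natAbs = k + 1 := by omega
      rw [hn]; exact hka
    · simp only [Δ, if_pos hneg]
      have hn : (-(k : ℤ)).natAbs = k := by omega
      rw [hn]; exact hkb
  · rcases lt_or_ge s 1 with h1 | h1
    · refine ⟨0, ?_⟩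
      simp only [Iint, if_neg (by norm_num : ¬(0:ℤ) < 0), if_pos rfl]
      exact ⟨hb, h1⟩
    · have ht0 : 0 < Real.sqrt 2 - s := by linarith
      have ht1 : Real.sqrt 2 - s ≤ β := by unfold β; linarith
      obtain ⟨k, hk1, hka, hkb⟩ := exists_k ht0 ht1
      refine ⟨(k : ℤ), ?_⟩
      have hpos : ¬((k : ℤ) < 0) := by omega
      have hne : ¬((k : ℤ) = 0) := by omega
      simp only [Iint, if_neg hpos, if_neg hne]
      constructor
      · simp only [Δ, if_neg hpos, if_neg hne]
        have hn : ((k : ℤ)).natAbs = k := by omega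
        rw [hn]; linarith
      · have hpos' : ¬((k : ℤ) + 1 < 0) := by omega
        have hne' : ¬((k : ℤ) + 1 = 0) := by omega
        simp only [Δ, if_neg hpos', if_neg hne']
        have hn : ((k : ℤ) + 1).natAbs = k + 1 := by omega
        rw [hn]; linarith


/-- the minimal denominator `d*` is a constant of the motion:
for `s ∈ ℚ(√2) ∩ [0,√2]`, `f s ∈ ℚ(√2)`, and a positive integer `n` is the
least positive integer `d` with `d·s ∈ ℤ[√2]` iff it is the least positive
integer `d` with `d·(f s) ∈ ℤ[√2]`. -/
theorem luroth_min_denominator_invariant (f : ℝ → ℝ) (hf : IsLuroth f) :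
    ∀ s ∈ QSqrt2 ∩ Set.Icc (0 : ℝ) (Real.sqrt 2),
      f s ∈ QSqrt2 ∧
      ∀ n : ℕ,
        (IsLeast {d : ℕ | 0 < d ∧ ((d : ℝ) * s) ∈ ZSqrt2} n ↔
          IsLeast {d : ℕ | 0 < d ∧ ((d : ℝ) * f s) ∈ ZSqrt2} n) := by
  rintro s ⟨hsQ, hs0, hs2⟩
  have main : f s ∈ QSqrt2 ∧ ∀ d : ℕ, ((d : ℝ) * s ∈ ZSqrt2 ↔ (d : ℝ) * f s ∈ ZSqrt2) := by
    rcases eq_or_lt_of_le hs0 with h0 | h0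
    · have hfs : f s = 0 := by rw [← h0]; exact hf.1
      refine ⟨by rw [hfs]; exact ⟨0, 0, by norm_num⟩, fun d => ?_⟩
      rw [hfs, ← h0]
    · rcases eq_or_lt_of_le hs2 with h2 | h2
      · have hfs : f s = 0 := by rw [h2]; exact hf.2.1
        refine ⟨by rw [hfs]; exact ⟨0, 0, by norm_num⟩, fun d => ?_⟩
        rw [hfs, h2, mul_zero]
        exact iff_of_true ⟨0, d, by push_cast; ring⟩ Z_zero
      · obtain ⟨i, hi⟩ := exists_interval h0 h2
        have hfs : f s = fval i s := hf.2.2 i s hi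
        constructor
        · rw [hfs]
          rcases fval_eq i s with h | h <;> rw [h]
          · exact Q_mul (Z_subset_Q (Z_pow Z_omega _)) (Q_sub hsQ (Z_subset_Q (Z_Delta i)))
          · exact Q_mul (Z_subset_Q (Z_pow Z_omega _)) (Q_sub (Z_subset_Q (Z_Delta i)) hsQ)
        · intro d
          rw [hfs]
          exact key i s (d : ℝ) ⟨d, 0, by push_cast; ring⟩
  refine ⟨main.1, fun n => ?_⟩
  have hset : {d : ℕ | 0 < d ∧ ((d : ℝ) * s) ∈ ZSqrt2} =
      {d : ℕ | 0 < d ∧ ((d : ℝ) * f s) ∈ ZSqrt2} := by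
    ext d; exact and_congr_right fun _ => main.2 d
  rw [hset]
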